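/- Let X, Y, Z be Banach spaces and 1 ≤ p < ∞. Let Σ be a σ-algebra on B_{X*} and let U be a closed subspace of L(X*,Y) such that for every T ∈ U the function x* ↦ ‖T(x*)‖_Y on B_{X*} is Σ-measurable. Let S : U → Z be an (ℓ^s_p,ℓ_p)-summing operator. Then there exist a constant K ≥ 0 and a positive linear functional φ on the Banach space B(Σ) of bounded Σ-measurable real-valued functions on B_{X*} (with the supremum norm) satisfying φ(1) = 1 (equivalently, a finitely additive probability ν on Σ with φ(h) = ∫ h dν), such that ‖S(T)‖_Z^p ≤ K^p · φ(x* ↦ ‖T(x*)‖_Y^p) for every T ∈ U. -/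

import Mathlib

open MeasureTheory

/-- The closed unit ball of the dual of `X` (as a plain set, carrying a given
σ-algebra `Σ`). -/
abbrev Ball (X : Type*) [NormedAddCommGroup X] [NormedSpace ℝ X] : Type _ :=
  {x' : StrongDual ℝ X // ‖x'‖ ≤ 1}

/-- `B(Σ)`: the space of bounded `Σ`-measurable real-valued functions on `α`,
as a linear subspace of `α → ℝ`. -/
def BddMeasFuncs (α : Type*) [MeasurableSpace α] : Submodule ℝ (α → ℝ) where
  carrier := {f | Measurable f ∧ ∃ M : ℝ, ∀ x, |f x| ≤ M}
  add_mem' := by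
    rintro f g ⟨hf, M, hM⟩ ⟨hg, N, hN⟩
    exact ⟨hf.add hg, M + N, fun x =>
      (abs_add_le _ _).trans (add_le_add (hM x) (hN x))⟩
  zero_mem' := ⟨measurable_const, 0, fun x => by simp⟩
  smul_mem' := by
    rintro c f ⟨hf, M, hM⟩
    refine ⟨hf.const_smul c, |c| * M, fun x => ?_⟩
    simp only [Pi.smul_apply, smul_eq_mul, abs_mul]
    exact mul_le_mul_of_nonneg_left (hM x) (abs_nonneg c)

section Aux
open Pointwise

variable {X Y Z : Type*} [NormedAddCommGroup X] [NormedSpace ℝ X]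
  [NormedAddCommGroup Y] [NormedSpace ℝ Y]
  [NormedAddCommGroup Z] [NormedSpace ℝ Z]

instance ballNonempty : Nonempty (Ball X) := ⟨⟨0, by simp⟩⟩

variable (p K : ℝ)
  (U : Submodule ℝ (StrongDual ℝ X →L[ℝ] Y))
  (S : U →L[ℝ] Z)

/-- The basic "term" function `x ↦ K^p ‖T x‖^p - ‖S T‖^p`. -/
noncomputable def Fterm (T : U) : Ball X → ℝ :=
  fun x => K ^ p * ‖(T : StrongDual ℝ X →L[ℝ] Y) x.1‖ ^ p - ‖S T‖ ^ p

/-- The convex cone of finite sums of term functions. -/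
def Dset : Set (Ball X → ℝ) :=
  {h | ∃ (n : ℕ) (T : Fin n → U), h = fun x => ∑ i, Fterm p K U S (T i) x}

lemma bddAbove_of_bound {u : Ball X → ℝ} {M : ℝ} (hM : ∀ x, u x ≤ M) :
    BddAbove (Set.range u) := ⟨M, by rintro _ ⟨x, rfl⟩; exact hM x⟩

lemma Dset_zero_mem : (0 : Ball X → ℝ) ∈ Dset p K U S := by
  refine ⟨0, Fin.elim0, ?_⟩
  funext x; simp

lemma Dset_bound {h : Ball X → ℝ} (hh : h ∈ Dset p K U S) (hK : 0 ≤ K) (hp : 0 ≤ p) :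
    ∃ M, ∀ x, |h x| ≤ M := by
  obtain ⟨n, T, rfl⟩ := hh
  refine ⟨∑ i, (K ^ p * ‖(T i : StrongDual ℝ X →L[ℝ] Y)‖ ^ p + ‖S (T i)‖ ^ p),
    fun x => ?_⟩
  refine (Finset.abs_sum_le_sum_abs _ _).trans (Finset.sum_le_sum fun i _ => ?_)
  rw [Fterm]
  refine (abs_sub _ _).trans (add_le_add ?_ ?_)
  · rw [abs_of_nonneg (mul_nonneg (Real.rpow_nonneg hK _) (Real.rpow_nonneg (norm_nonneg _) _))]
    refine mul_le_mul_of_nonneg_left ?_ (Real.rpow_nonneg hK _)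
    refine Real.rpow_le_rpow (norm_nonneg _) ?_ hp
    exact ((T i : StrongDual ℝ X →L[ℝ] Y).le_opNorm x.1).trans
      (mul_le_of_le_one_right (norm_nonneg _) x.2)
  · rw [abs_of_nonneg (Real.rpow_nonneg (norm_nonneg _) _)]

lemma Dset_add_mem {h₁ h₂ : Ball X → ℝ} (H1 : h₁ ∈ Dset p K U S) (H2 : h₂ ∈ Dset p K U S) :
    (fun x => h₁ x + h₂ x) ∈ Dset p K U S := by
  obtain ⟨n₁, T₁, rfl⟩ := H1
  obtain ⟨n₂, T₂, rfl⟩ := H2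
  refine ⟨n₁ + n₂, Fin.append T₁ T₂, ?_⟩
  funext x
  rw [Fin.sum_univ_add]
  simp [Fin.append_left, Fin.append_right]

lemma Dset_single_mem (T : U) : Fterm p K U S T ∈ Dset p K U S := by
  refine ⟨1, fun _ => T, ?_⟩
  funext x
  simp

lemma Dset_smul_mem (hp : 1 ≤ p) {c : ℝ} (hc : 0 < c) {h : Ball X → ℝ}
    (H : h ∈ Dset p K U S) : (fun x => c * h x) ∈ Dset p K U S := by
  have hp0 : (0:ℝ) < p := lt_of_lt_of_le one_pos hp
  obtain ⟨n, T, rfl⟩ := H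
  refine ⟨n, fun i => (c ^ (1/p)) • T i, ?_⟩
  funext x
  rw [Finset.mul_sum]
  refine Finset.sum_congr rfl fun i _ => ?_
  have hcp : (0:ℝ) ≤ c ^ (1/p) := Real.rpow_nonneg hc.le _
  have hkey : (c ^ (1/p)) ^ p = c := by
    rw [← Real.rpow_mul hc.le, one_div_mul_cancel (ne_of_gt hp0), Real.rpow_one]
  have hnorm : ∀ v : Y, ‖(c ^ (1/p)) • v‖ ^ p = c * ‖v‖ ^ p := by
    intro v
    rw [norm_smul, Real.norm_eq_abs, abs_of_nonneg hcp,
      Real.mul_rpow hcp (norm_nonneg v), hkey]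
  have hZ : ∀ v : Z, ‖(c ^ (1/p)) • v‖ ^ p = c * ‖v‖ ^ p := by
    intro v
    rw [norm_smul, Real.norm_eq_abs, abs_of_nonneg hcp,
      Real.mul_rpow hcp (norm_nonneg v), hkey]
  simp only [Fterm]
  rw [_root_.map_smul]
  have : ((((c ^ (1/p)) • T i : U)) : StrongDual ℝ X →L[ℝ] Y) x.1
      = (c ^ (1/p)) • ((T i : StrongDual ℝ X →L[ℝ] Y) x.1) := by
    simp
  rw [this, hnorm, hZ]
  ring

lemma key_ineq (hp : 1 ≤ p) (hK : 0 ≤ K)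
    (hSK : ∀ (n : ℕ) (T : Fin n → U),
      (∑ i, ‖S (T i)‖ ^ p) ^ (1/p) ≤
        K * ⨆ x : Ball X,
          (∑ i, ‖(T i : StrongDual ℝ X →L[ℝ] Y) x.1‖ ^ p) ^ (1/p))
    (n : ℕ) (T : Fin n → U) :
    (∑ i, ‖S (T i)‖ ^ p) ≤
      K ^ p * ⨆ x : Ball X, ∑ i, ‖(T i : StrongDual ℝ X →L[ℝ] Y) x.1‖ ^ p := by
  have hp0 : (0:ℝ) < p := lt_of_lt_of_le one_pos hp
  set A : Ball X → ℝ := fun x => ∑ i, ‖(T i : StrongDual ℝ X →L[ℝ] Y) x.1‖ ^ p with hA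
  have hAnn : ∀ x, 0 ≤ A x := fun x =>
    Finset.sum_nonneg fun i _ => Real.rpow_nonneg (norm_nonneg _) p
  have hAbd : ∀ x, A x ≤ ∑ i, ‖(T i : StrongDual ℝ X →L[ℝ] Y)‖ ^ p := fun x =>
    Finset.sum_le_sum fun i _ =>
      Real.rpow_le_rpow (norm_nonneg _)
        (((T i : StrongDual ℝ X →L[ℝ] Y).le_opNorm x.1).trans
          (mul_le_of_le_one_right (norm_nonneg _) x.2)) hp0.le
  have bddA : BddAbove (Set.range A) := bddAbove_of_bound hAbd
  have sAnn : 0 ≤ ⨆ x, A x :=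
    le_ciSup_of_le bddA (Classical.arbitrary _) (hAnn _)
  have hcancel : ∀ a : ℝ, 0 ≤ a → (a ^ (1/p)) ^ p = a := fun a ha => by
    rw [← Real.rpow_mul ha, one_div_mul_cancel (ne_of_gt hp0), Real.rpow_one]
  have bddA' : BddAbove (Set.range fun x => A x ^ (1/p)) :=
    bddAbove_of_bound (M := (∑ i, ‖(T i : StrongDual ℝ X →L[ℝ] Y)‖ ^ p) ^ (1/p))
      (fun x => Real.rpow_le_rpow (hAnn x) (hAbd x) (by positivity))
  have hsnn : 0 ≤ ⨆ x, A x ^ (1/p) :=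
    le_ciSup_of_le bddA' (Classical.arbitrary _) (Real.rpow_nonneg (hAnn _) _)
  have hs : (⨆ x, A x ^ (1/p)) ≤ (⨆ x, A x) ^ (1/p) :=
    ciSup_le fun x => Real.rpow_le_rpow (hAnn x) (le_ciSup bddA x) (by positivity)
  have hsum_nn : 0 ≤ ∑ i, ‖S (T i)‖ ^ p :=
    Finset.sum_nonneg fun i _ => Real.rpow_nonneg (norm_nonneg _) _
  have h2 : ((∑ i, ‖S (T i)‖ ^ p) ^ (1/p)) ^ p ≤ (K * ⨆ x, A x ^ (1/p)) ^ p :=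
    Real.rpow_le_rpow (Real.rpow_nonneg hsum_nn _) (hSK n T) hp0.le
  calc ∑ i, ‖S (T i)‖ ^ p = ((∑ i, ‖S (T i)‖ ^ p) ^ (1/p)) ^ p :=
        (hcancel _ hsum_nn).symm
    _ ≤ (K * ⨆ x, A x ^ (1/p)) ^ p := h2
    _ = K ^ p * (⨆ x, A x ^ (1/p)) ^ p := Real.mul_rpow hK hsnn
    _ ≤ K ^ p * ((⨆ x, A x) ^ (1/p)) ^ p :=
        mul_le_mul_of_nonneg_left (Real.rpow_le_rpow hsnn hs hp0.le)
          (Real.rpow_nonneg hK _)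
    _ = K ^ p * ⨆ x, A x := by rw [hcancel _ sAnn]

lemma Dset_sup_nonneg (hp : 1 ≤ p) (hK : 0 ≤ K)
    (hSK : ∀ (n : ℕ) (T : Fin n → U),
      (∑ i, ‖S (T i)‖ ^ p) ^ (1/p) ≤
        K * ⨆ x : Ball X,
          (∑ i, ‖(T i : StrongDual ℝ X →L[ℝ] Y) x.1‖ ^ p) ^ (1/p))
    {h : Ball X → ℝ} (hh : h ∈ Dset p K U S) : 0 ≤ ⨆ x, h x := by
  have hp0 : (0:ℝ) < p := lt_of_lt_of_le one_pos hp
  obtain ⟨n, T, rfl⟩ := hh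
  obtain ⟨M, hM⟩ := Dset_bound p K U S ⟨n, T, rfl⟩ hK hp0.le
  have bddh : BddAbove (Set.range fun x : Ball X => ∑ i, Fterm p K U S (T i) x) :=
    bddAbove_of_bound (M := M) fun x => (abs_le.mp (hM x)).2
  set c : ℝ := ∑ i, ‖S (T i)‖ ^ p with hc
  have hsplit : ∀ x : Ball X, (∑ i, Fterm p K U S (T i) x)
      = (∑ i, K ^ p * ‖(T i : StrongDual ℝ X →L[ℝ] Y) x.1‖ ^ p) - c := by
    intro x
    rw [hc, ← Finset.sum_sub_distrib]
    rfl
  have hBle : ∀ x : Ball X, (∑ i, K ^ p * ‖(T i : StrongDual ℝ X →L[ℝ] Y) x.1‖ ^ p)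
      ≤ (⨆ x : Ball X, ∑ i, Fterm p K U S (T i) x) + c := by
    intro x
    have := le_ciSup bddh x
    rw [hsplit x] at this
    linarith
  have hBsup : K ^ p * (⨆ x : Ball X, ∑ i, ‖(T i : StrongDual ℝ X →L[ℝ] Y) x.1‖ ^ p)
      ≤ (⨆ x : Ball X, ∑ i, Fterm p K U S (T i) x) + c := by
    rw [Real.mul_iSup_of_nonneg (Real.rpow_nonneg hK p)]
    refine ciSup_le fun x => ?_
    rw [Finset.mul_sum]
    exact hBle x
  have := key_ineq p K U S hp hK hSK n T
  linarith

variable (m : MeasurableSpace (Ball X))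

/-- The set over which we take the infimum defining the sublinear functional. -/
noncomputable def QS (f : BddMeasFuncs (Ball X)) : Set ℝ :=
  (fun h => ⨆ x, (f.1 x + h x)) '' Dset p K U S

/-- The Pietsch sublinear functional. -/
noncomputable def qfun (f : BddMeasFuncs (Ball X)) : ℝ := sInf (QS p K U S m f)

lemma QS_nonempty (f : BddMeasFuncs (Ball X)) : (QS p K U S m f).Nonempty :=
  ⟨_, Set.mem_image_of_mem _ (Dset_zero_mem p K U S)⟩

lemma QS_lb (hp : 1 ≤ p) (hK : 0 ≤ K)
    (hSK : ∀ (n : ℕ) (T : Fin n → U),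
      (∑ i, ‖S (T i)‖ ^ p) ^ (1/p) ≤
        K * ⨆ x : Ball X,
          (∑ i, ‖(T i : StrongDual ℝ X →L[ℝ] Y) x.1‖ ^ p) ^ (1/p))
    (f : BddMeasFuncs (Ball X)) {Mf : ℝ} (hMf : ∀ x, |f.1 x| ≤ Mf) :
    ∀ r ∈ QS p K U S m f, -Mf ≤ r := by
  rintro _ ⟨h, hh, rfl⟩
  obtain ⟨Mh, hMh⟩ := Dset_bound p K U S hh hK (le_trans zero_le_one hp)
  have bddfh : BddAbove (Set.range fun x => f.1 x + h x) :=
    bddAbove_of_bound (M := Mf + Mh) fun x =>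
      add_le_add (abs_le.mp (hMf x)).2 (abs_le.mp (hMh x)).2
  have h1 : (⨆ x, h x) ≤ Mf + ⨆ x, f.1 x + h x := by
    refine ciSup_le fun x => ?_
    have := le_ciSup bddfh x
    have := (abs_le.mp (hMf x)).1
    linarith
  have h0 : 0 ≤ ⨆ x, h x := Dset_sup_nonneg p K U S hp hK hSK hh
  linarith

lemma QS_bddBelow (hp : 1 ≤ p) (hK : 0 ≤ K)
    (hSK : ∀ (n : ℕ) (T : Fin n → U),
      (∑ i, ‖S (T i)‖ ^ p) ^ (1/p) ≤
        K * ⨆ x : Ball X,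
          (∑ i, ‖(T i : StrongDual ℝ X →L[ℝ] Y) x.1‖ ^ p) ^ (1/p))
    (f : BddMeasFuncs (Ball X)) : BddBelow (QS p K U S m f) := by
  obtain ⟨Mf, hMf⟩ := f.2.2
  exact ⟨-Mf, fun r hr => QS_lb p K U S m hp hK hSK f hMf r hr⟩

lemma qfun_le (hp : 1 ≤ p) (hK : 0 ≤ K)
    (hSK : ∀ (n : ℕ) (T : Fin n → U),
      (∑ i, ‖S (T i)‖ ^ p) ^ (1/p) ≤
        K * ⨆ x : Ball X,
          (∑ i, ‖(T i : StrongDual ℝ X →L[ℝ] Y) x.1‖ ^ p) ^ (1/p))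
    (f : BddMeasFuncs (Ball X)) {h : Ball X → ℝ} (hh : h ∈ Dset p K U S) :
    qfun p K U S m f ≤ ⨆ x, (f.1 x + h x) :=
  csInf_le (QS_bddBelow p K U S m hp hK hSK f) ⟨h, hh, rfl⟩

lemma qfun_add (hp : 1 ≤ p) (hK : 0 ≤ K)
    (hSK : ∀ (n : ℕ) (T : Fin n → U),
      (∑ i, ‖S (T i)‖ ^ p) ^ (1/p) ≤
        K * ⨆ x : Ball X,
          (∑ i, ‖(T i : StrongDual ℝ X →L[ℝ] Y) x.1‖ ^ p) ^ (1/p))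
    (f g : BddMeasFuncs (Ball X)) :
    qfun p K U S m (f + g) ≤ qfun p K U S m f + qfun p K U S m g := by
  refine le_of_forall_pos_le_add fun ε hε => ?_
  obtain ⟨a, ⟨h₁, hh₁, rfl⟩, ha⟩ :=
    Real.lt_sInf_add_pos (QS_nonempty p K U S m f) (half_pos hε)
  obtain ⟨b, ⟨h₂, hh₂, rfl⟩, hb⟩ :=
    Real.lt_sInf_add_pos (QS_nonempty p K U S m g) (half_pos hε)
  obtain ⟨Mf, hMf⟩ := f.2.2
  obtain ⟨Mg, hMg⟩ := g.2.2
  obtain ⟨M₁, hM₁⟩ := Dset_bound p K U S hh₁ hK (le_trans zero_le_one hp)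
  obtain ⟨M₂, hM₂⟩ := Dset_bound p K U S hh₂ hK (le_trans zero_le_one hp)
  have bdd1 : BddAbove (Set.range fun x => f.1 x + h₁ x) :=
    bddAbove_of_bound (M := Mf + M₁) fun x =>
      add_le_add (abs_le.mp (hMf x)).2 (abs_le.mp (hM₁ x)).2
  have bdd2 : BddAbove (Set.range fun x => g.1 x + h₂ x) :=
    bddAbove_of_bound (M := Mg + M₂) fun x =>
      add_le_add (abs_le.mp (hMg x)).2 (abs_le.mp (hM₂ x)).2
  have step : qfun p K U S m (f + g) ≤ ⨆ x, ((f + g).1 x + (h₁ x + h₂ x)) :=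
    qfun_le p K U S m hp hK hSK (f + g) (Dset_add_mem p K U S hh₁ hh₂)
  have step2 : (⨆ x, ((f + g).1 x + (h₁ x + h₂ x)))
      ≤ (⨆ x, (f.1 x + h₁ x)) + ⨆ x, (g.1 x + h₂ x) := by
    refine ciSup_le fun x => ?_
    have t1 := le_ciSup bdd1 x
    have t2 := le_ciSup bdd2 x
    have hcoe : (f + g).1 x = f.1 x + g.1 x := rfl
    rw [hcoe]
    linarith
  have hqf : sInf (QS p K U S m f) = qfun p K U S m f := rfl
  have hqg : sInf (QS p K U S m g) = qfun p K U S m g := rfl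
  rw [hqf] at ha
  rw [hqg] at hb
  linarith

lemma qfun_smul (hp : 1 ≤ p) (hK : 0 ≤ K)
    (hSK : ∀ (n : ℕ) (T : Fin n → U),
      (∑ i, ‖S (T i)‖ ^ p) ^ (1/p) ≤
        K * ⨆ x : Ball X,
          (∑ i, ‖(T i : StrongDual ℝ X →L[ℝ] Y) x.1‖ ^ p) ^ (1/p))
    {c : ℝ} (hc : 0 < c) (f : BddMeasFuncs (Ball X)) :
    qfun p K U S m (c • f) = c * qfun p K U S m f := by
  have hQS : QS p K U S m (c • f) = c • QS p K U S m f := by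
    ext r
    constructor
    · rintro ⟨h, hh, rfl⟩
      refine ⟨⨆ x, (f.1 x + c⁻¹ * h x),
        ⟨fun x => c⁻¹ * h x, Dset_smul_mem p K U S hp (inv_pos.mpr hc) hh, rfl⟩, ?_⟩
      show c * (⨆ x, (f.1 x + c⁻¹ * h x)) = ⨆ x, ((c • f).1 x + h x)
      rw [Real.mul_iSup_of_nonneg hc.le]
      refine iSup_congr fun x => ?_
      have hcoe : (c • f).1 x = c * f.1 x := rfl
      rw [hcoe]
      field_simp
    · rintro ⟨r', ⟨h, hh, rfl⟩, rfl⟩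
      refine ⟨fun x => c * h x, Dset_smul_mem p K U S hp hc hh, ?_⟩
      show (⨆ x, ((c • f).1 x + c * h x)) = c * ⨆ x, (f.1 x + h x)
      rw [Real.mul_iSup_of_nonneg hc.le]
      refine iSup_congr fun x => ?_
      have hcoe : (c • f).1 x = c * f.1 x := rfl
      rw [hcoe]
      ring
  rw [qfun, hQS, Real.sInf_smul_of_nonneg hc.le, smul_eq_mul, qfun]

lemma qfun_zero_nonneg (hp : 1 ≤ p) (hK : 0 ≤ K)
    (hSK : ∀ (n : ℕ) (T : Fin n → U),
      (∑ i, ‖S (T i)‖ ^ p) ^ (1/p) ≤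
        K * ⨆ x : Ball X,
          (∑ i, ‖(T i : StrongDual ℝ X →L[ℝ] Y) x.1‖ ^ p) ^ (1/p)) :
    0 ≤ qfun p K U S m 0 := by
  refine le_csInf (QS_nonempty p K U S m 0) ?_
  rintro _ ⟨h, hh, rfl⟩
  show 0 ≤ ⨆ x, ((0 : BddMeasFuncs (Ball X)).1 x + h x)
  have : (⨆ x, ((0 : BddMeasFuncs (Ball X)).1 x + h x)) = ⨆ x, h x := by
    refine iSup_congr fun x => ?_
    have : (0 : BddMeasFuncs (Ball X)).1 x = 0 := rfl
    rw [this, zero_add]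
  rw [this]
  exact Dset_sup_nonneg p K U S hp hK hSK hh

end Aux

theorem finitelyAdditive_pietsch_domination
    {X Y Z : Type*} [NormedAddCommGroup X] [NormedSpace ℝ X] [CompleteSpace X]
    [NormedAddCommGroup Y] [NormedSpace ℝ Y] [CompleteSpace Y]
    [NormedAddCommGroup Z] [NormedSpace ℝ Z] [CompleteSpace Z]
    (p : ℝ) (hp : 1 ≤ p)
    (m : MeasurableSpace (Ball X))
    (U : Submodule ℝ (StrongDual ℝ X →L[ℝ] Y))
    (hUclosed : IsClosed (U : Set (StrongDual ℝ X →L[ℝ] Y)))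
    (hmeas : ∀ T ∈ U, Measurable fun x : Ball X => ‖T x.1‖)
    (S : U →L[ℝ] Z)
    (hS : ∃ K : ℝ, 0 ≤ K ∧ ∀ (n : ℕ) (T : Fin n → U),
      (∑ i, ‖S (T i)‖ ^ p) ^ (1/p) ≤
        K * ⨆ x : Ball X,
          (∑ i, ‖(T i : StrongDual ℝ X →L[ℝ] Y) x.1‖ ^ p) ^ (1/p)) :
    ∃ K : ℝ, 0 ≤ K ∧ ∃ φ : BddMeasFuncs (Ball X) →ₗ[ℝ] ℝ,
      (∀ f : BddMeasFuncs (Ball X), (∀ x, 0 ≤ f.1 x) → 0 ≤ φ f) ∧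
      (∃ one : BddMeasFuncs (Ball X), (∀ x, one.1 x = 1) ∧ φ one = 1) ∧
      ∀ T : U, ∃ g : BddMeasFuncs (Ball X),
        (∀ x : Ball X, g.1 x = ‖(T : StrongDual ℝ X →L[ℝ] Y) x.1‖ ^ p) ∧
        ‖S T‖ ^ p ≤ K ^ p * φ g := by
  obtain ⟨K, hK, hSK⟩ := hS
  have hp0 : (0:ℝ) < p := lt_of_lt_of_le one_pos hp
  obtain ⟨φ, -, hφ⟩ :=
    exists_extension_of_le_sublinear (⟨⊥, 0⟩ : BddMeasFuncs (Ball X) →ₗ.[ℝ] ℝ)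
      (qfun p K U S m)
      (fun c hc f => qfun_smul p K U S m hp hK hSK hc f)
      (fun f g => qfun_add p K U S m hp hK hSK f g)
      (fun x => by
        have hx : ((x : BddMeasFuncs (Ball X))) = 0 := (Submodule.mem_bot ℝ).mp x.2
        have h0 : (⟨⊥, 0⟩ : BddMeasFuncs (Ball X) →ₗ.[ℝ] ℝ) x = 0 := rfl
        rw [h0, hx]
        exact qfun_zero_nonneg p K U S m hp hK hSK)
  have hsup : ∀ f : BddMeasFuncs (Ball X), φ f ≤ ⨆ x, f.1 x := by
    intro f
    refine (hφ f).trans ?_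
    have h0 := qfun_le p K U S m hp hK hSK f (Dset_zero_mem p K U S)
    simpa using h0
  have hpos : ∀ f : BddMeasFuncs (Ball X), (∀ x, 0 ≤ f.1 x) → 0 ≤ φ f := by
    intro f hf
    have h1 : φ (-f) ≤ ⨆ x, (-f).1 x := hsup (-f)
    have h2 : (⨆ x, (-f).1 x) ≤ 0 := by
      refine ciSup_le fun x => ?_
      have := hf x
      have hcoe : (-f).1 x = -(f.1 x) := rfl
      rw [hcoe]; linarith
    have h3 : φ (-f) = -φ f := map_neg φ f
    linarith
  have honemem : (fun _ : Ball X => (1:ℝ)) ∈ BddMeasFuncs (Ball X) :=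
    ⟨measurable_const, 1, fun x => by norm_num⟩
  have honeval : φ (⟨fun _ => 1, honemem⟩ : BddMeasFuncs (Ball X)) = 1 := by
    have ha : φ ⟨fun _ => 1, honemem⟩ ≤ 1 := by
      have := hsup ⟨fun _ => 1, honemem⟩
      rwa [show (⨆ _ : Ball X, (1:ℝ)) = 1 from ciSup_const] at this
    have hb : φ (-⟨fun _ => 1, honemem⟩) ≤ -1 := by
      have h1 := hsup (-⟨fun _ => 1, honemem⟩)
      have h2 : (⨆ x : Ball X, (-(⟨fun _ => 1, honemem⟩ : BddMeasFuncs (Ball X))).1 x)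
          = -1 := by
        have he : ∀ x : Ball X,
            (-(⟨fun _ => 1, honemem⟩ : BddMeasFuncs (Ball X))).1 x = -1 := fun x => rfl
        rw [iSup_congr he]
        exact ciSup_const
      rw [h2] at h1
      exact h1
    have h3 : φ (-⟨fun _ => 1, honemem⟩) = -φ ⟨fun _ => 1, honemem⟩ := map_neg φ _
    rw [h3] at hb
    linarith
  refine ⟨K, hK, φ, hpos, ⟨⟨fun _ => 1, honemem⟩, fun x => rfl, honeval⟩, ?_⟩
  intro T
  have hgmem : (fun x : Ball X => ‖(T : StrongDual ℝ X →L[ℝ] Y) x.1‖ ^ p)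
      ∈ BddMeasFuncs (Ball X) := by
    refine ⟨(Real.continuous_rpow_const hp0.le).measurable.comp (hmeas T.1 T.2),
      ‖(T : StrongDual ℝ X →L[ℝ] Y)‖ ^ p, fun x => ?_⟩
    rw [abs_of_nonneg (Real.rpow_nonneg (norm_nonneg _) _)]
    exact Real.rpow_le_rpow (norm_nonneg _)
      (((T : StrongDual ℝ X →L[ℝ] Y).le_opNorm x.1).trans
        (mul_le_of_le_one_right (norm_nonneg _) x.2)) hp0.le
  refine ⟨⟨_, hgmem⟩, fun x => rfl, ?_⟩
  set g : BddMeasFuncs (Ball X) := ⟨_, hgmem⟩ with hg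
  set one : BddMeasFuncs (Ball X) := ⟨fun _ => 1, honemem⟩ with hone
  set negE : BddMeasFuncs (Ball X) := ‖S T‖ ^ p • one - K ^ p • g with hnegE
  have hval : φ negE ≤ 0 := by
    refine (hφ negE).trans ?_
    have h1 := qfun_le p K U S m hp hK hSK negE (Dset_single_mem p K U S T)
    have h2 : (⨆ x, (negE.1 x + Fterm p K U S T x)) = 0 := by
      have he : ∀ x : Ball X, negE.1 x + Fterm p K U S T x = 0 := by
        intro x
        show (‖S T‖ ^ p * 1 - K ^ p * ‖(T : StrongDual ℝ X →L[ℝ] Y) x.1‖ ^ p)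
            + (K ^ p * ‖(T : StrongDual ℝ X →L[ℝ] Y) x.1‖ ^ p - ‖S T‖ ^ p) = 0
        ring
      rw [iSup_congr he]
      exact ciSup_const
    rw [h2] at h1
    exact h1
  have hφsub : φ negE = ‖S T‖ ^ p * φ one - K ^ p * φ g := by
    rw [hnegE, map_sub, _root_.map_smul, _root_.map_smul, smul_eq_mul, smul_eq_mul]
  rw [hφsub, honeval] at hval
  linarith
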